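/- The stratification claim fails in ECC: with C := (Prop × Prop) × Prop, A := (Prop × Type_0) × Prop, and B := (Prop × Type_0) × Type_0 (all written as nested Σ-types), one has C ⪯ A ≺_1 B but C ⪯_1 A does not hold. -/

import Mathlib

namespace ECC

/-- Terms of Luo's Extended Calculus of Constructions, in de Bruijn representation. -/
inductive Term : Type
  | var   : ℕ → Term
  | prop  : Term
  | type  : ℕ → Term
  | pi    : Term → Term → Term
  | sigma : Term → Term → Term
  | lam   : Term → Term → Term
  | app   : Term → Term → Term
  | pair  : Term → Term → Term → Term   -- ⟨M, N⟩_B with type annotation B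
  | proj1 : Term → Term
  | proj2 : Term → Term
deriving DecidableEq

/-- Lift (shift by `d`) all de Bruijn indices ≥ `k`. -/
def lift (d : ℕ) : ℕ → Term → Term
  | k, .var n       => if n < k then .var n else .var (n + d)
  | _, .prop        => .prop
  | _, .type j      => .type j
  | k, .pi A B      => .pi (lift d k A) (lift d (k+1) B)
  | k, .sigma A B   => .sigma (lift d k A) (lift d (k+1) B)
  | k, .lam A M     => .lam (lift d k A) (lift d (k+1) M)
  | k, .app M N     => .app (lift d k M) (lift d k N)
  | k, .pair M N B  => .pair (lift d k M) (lift d k N) (lift d k B)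
  | k, .proj1 M     => .proj1 (lift d k M)
  | k, .proj2 M     => .proj2 (lift d k M)

/-- Capture-avoiding substitution `[N/x]A` of the term `N` for the variable `x` in `A`. -/
def subst (N : Term) : ℕ → Term → Term
  | k, .var n       => if n < k then .var n else if n = k then lift k 0 N else .var (n - 1)
  | _, .prop        => .prop
  | _, .type j      => .type j
  | k, .pi A B      => .pi (subst N k A) (subst N (k+1) B)
  | k, .sigma A B   => .sigma (subst N k A) (subst N (k+1) B)
  | k, .lam A M     => .lam (subst N k A) (subst N (k+1) M)
  | k, .app M M'    => .app (subst N k M) (subst N k M')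
  | k, .pair M M' B => .pair (subst N k M) (subst N k M') (subst N k B)
  | k, .proj1 M     => .proj1 (subst N k M)
  | k, .proj2 M     => .proj2 (subst N k M)

/-- `[N/x₀]B` : substitution for the outermost bound variable. -/
def subst0 (B N : Term) : Term := subst N 0 B

/-- One-step reduction (β together with the projection reductions, closed under all
term-formation congruences). -/
inductive Red : Term → Term → Prop
  | beta    : Red (.app (.lam A M) N) (subst0 M N)
  | pr1     : Red (.proj1 (.pair M N B)) M
  | pr2     : Red (.proj2 (.pair M N B)) N
  | piL     : Red A A' → Red (.pi A B) (.pi A' B)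
  | piR     : Red B B' → Red (.pi A B) (.pi A B')
  | sigmaL  : Red A A' → Red (.sigma A B) (.sigma A' B)
  | sigmaR  : Red B B' → Red (.sigma A B) (.sigma A B')
  | lamL    : Red A A' → Red (.lam A M) (.lam A' M)
  | lamR    : Red M M' → Red (.lam A M) (.lam A M')
  | appL    : Red M M' → Red (.app M N) (.app M' N)
  | appR    : Red N N' → Red (.app M N) (.app M N')
  | pairL   : Red M M' → Red (.pair M N B) (.pair M' N B)
  | pairR   : Red N N' → Red (.pair M N B) (.pair M N' B)
  | pairB   : Red B B' → Red (.pair M N B) (.pair M N B')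
  | proj1C  : Red M M' → Red (.proj1 M) (.proj1 M')
  | proj2C  : Red M M' → Red (.proj2 M) (.proj2 M')

/-- Conversion `≃` : the equivalence relation generated by reduction. -/
def Conv : Term → Term → Prop := Relation.EqvGen Red

/-- `A` has a normal form. -/
def HasNF (A : Term) : Prop :=
  ∃ B, Relation.ReflTransGen Red A B ∧ ∀ C, ¬ Red B C

/-- `𝒯` : the set of normalisable terms. -/
def Tset : Set Term := {A | HasNF A}

/-- Universes are `Prop` and the `Type_j`. -/
def IsUniv (T : Term) : Prop := T = .prop ∨ ∃ j, T = .type j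

/-- The cumulativity relation `⪯` : the smallest preorder containing conversion,
the universe order, congruence for Π in the codomain, and congruence for Σ in both
components. -/
inductive Cum : Term → Term → Prop
  | conv     : Conv A B → Cum A B
  | propType : Cum .prop (.type 0)
  | typeType : j ≤ k → Cum (.type j) (.type k)
  | pi       : Conv A A' → Cum B B' → Cum (.pi A B) (.pi A' B')
  | sigma    : Cum A A' → Cum B B' → Cum (.sigma A B) (.sigma A' B')
  | trans    : Cum A B → Cum B C → Cum A C

/-- The strict cumulativity relation `≺` : `A ⪯ B` and `A ≄ B`. -/
def SCum (A B : Term) : Prop := Cum A B ∧ ¬ Conv A B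

/-- The stratified cumulativity relations `⪯ᵢ`. -/
inductive CumL : ℕ → Term → Term → Prop
  | conv     : Conv A B → CumL i A B
  | propType : CumL i .prop (.type j)
  | typeType : j < k → CumL i (.type j) (.type k)
  | succ     : CumL i A B → CumL (i+1) A B
  | pi       : Conv M (.pi A B) → Conv N (.pi A' B') → Conv A A' → CumL i B B' →
               CumL (i+1) M N
  | sigma    : Conv M (.sigma A B) → Conv N (.sigma A' B') → CumL i A A' → CumL i B B' →
               CumL (i+1) M N

/-- Strict stratified cumulativity `≺ᵢ`. -/
def SCumL (i : ℕ) (A B : Term) : Prop := CumL i A B ∧ ¬ Conv A B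

/-- Is the outermost symbol of a term Π or Σ? -/
def BinderHeaded : Term → Prop
  | .pi _ _    => True
  | .sigma _ _ => True
  | _          => False

/-- The base stratum: normalisable terms not convertible to a binder-headed
normalisable term. -/
def Base : Set Term :=
  {T | HasNF T ∧ ¬ ∃ B, HasNF B ∧ BinderHeaded B ∧ Conv T B}

/-- The stratification `(Π_n, Σ_n)` of `𝒯`. -/
def Strata : ℕ → Set Term × Set Term
  | 0 => (Base, Base)
  | n+1 =>
    ({T | ∃ k l, ∃ _ : k + l = n, ∃ A B, HasNF (Term.pi A B) ∧ Conv T (Term.pi A B) ∧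
        A ∈ (Strata k).1 ∪ (Strata k).2 ∧ B ∈ (Strata l).1 ∪ (Strata l).2},
     {T | ∃ k l, ∃ _ : k + l = n, ∃ A B, HasNF (Term.sigma A B) ∧ Conv T (Term.sigma A B) ∧
        A ∈ (Strata k).1 ∪ (Strata k).2 ∧ B ∈ (Strata l).1 ∪ (Strata l).2})
termination_by n => n
decreasing_by all_goals omega

/-- The stratum `Π_n`. -/
def PiStr (n : ℕ) : Set Term := (Strata n).1

/-- The stratum `Σ_n`. -/
def SigStr (n : ℕ) : Set Term := (Strata n).2

/-- The specification of the rank function `φ : 𝒯 → ω`. -/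
def PhiSpec (φ : Term → ℕ) : Prop :=
  (∀ M N, HasNF M → HasNF N → Conv M N → φ M = φ N) ∧
  (∀ T, HasNF T → Conv T .prop → φ T = 2) ∧
  (∀ T j, HasNF T → Conv T (.type j) → φ T = 3 + j) ∧
  (∀ T, T ∈ PiStr 0 → ¬ Conv T .prop → (∀ j, ¬ Conv T (.type j)) → φ T = 1) ∧
  (∀ T A B, HasNF T → (Conv T (.pi A B) ∨ Conv T (.sigma A B)) → φ T = φ A * φ B) ∧
  (∀ T, HasNF T → 0 < φ T)

mutual
/-- Valid contexts of ECC (de Bruijn: the head of the list is the most recent entry). -/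
inductive Valid : List Term → Prop
  | nil  : Valid []
  | cons : Typing Γ A (.type j) → Valid (A :: Γ)

/-- The typing judgement `Γ ⊢ M : A` of ECC. -/
inductive Typing : List Term → Term → Term → Prop
  | prop  : Valid Γ → Typing Γ .prop (.type 0)
  | type  : Valid Γ → Typing Γ (.type j) (.type (j+1))
  | var   : Valid Γ → Γ[n]? = some A → Typing Γ (.var n) (lift (n+1) 0 A)
  | pi1   : Typing Γ A (.type j) → Typing (A :: Γ) B .prop →
            Typing Γ (.pi A B) .prop
  | pi2   : Typing Γ A (.type j) → Typing (A :: Γ) B (.type j) →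
            Typing Γ (.pi A B) (.type j)
  | sig   : Typing Γ A (.type j) → Typing (A :: Γ) B (.type j) →
            Typing Γ (.sigma A B) (.type j)
  | lam   : Typing (A :: Γ) M B → Typing Γ (.lam A M) (.pi A B)
  | app   : Typing Γ M (.pi A B) → Typing Γ N A → Typing Γ (.app M N) (subst0 B N)
  | pair  : Typing Γ M A → Typing Γ N (subst0 B M) → Typing (A :: Γ) B (.type j) →
            Typing Γ (.pair M N (.sigma A B)) (.sigma A B)
  | proj1 : Typing Γ M (.sigma A B) → Typing Γ (.proj1 M) A
  | proj2 : Typing Γ M (.sigma A B) → Typing Γ (.proj2 M) (subst0 B (.proj1 M))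
  | cum   : Typing Γ M A → Typing Γ B (.type j) → Cum A B → Typing Γ M B
end

/-- `Type_j` for `j ∈ ℤ`, with the convention `Type_{-1} = Prop`. -/
def TType (j : ℤ) : Term := if j < 0 then .prop else .type j.toNat

/-- The typing judgement of the restricted system `ECC⁻`: the rules
`(Π2)(Σ)(app)(pair)(⪯)` of ECC are replaced by `(Π2')(Σ')(app')(pair')` and `(≃)_ρ`. -/
inductive TypingM : List Term → Term → Term → Prop
  | prop  : Valid Γ → TypingM Γ .prop (.type 0)
  | type  : Valid Γ → TypingM Γ (.type j) (.type (j+1))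
  | var   : Valid Γ → Γ[n]? = some A → TypingM Γ (.var n) (lift (n+1) 0 A)
  | pi1   : TypingM Γ A (.type j) → TypingM (A :: Γ) B .prop →
            TypingM Γ (.pi A B) .prop
  | pi2'  : TypingM Γ A (TType j) → TypingM (A :: Γ) B (TType k) → 0 ≤ k →
            TypingM Γ (.pi A B) (TType (max (max j k) 0))
  | sig'  : TypingM Γ A (TType j) → TypingM (A :: Γ) B (TType k) →
            TypingM Γ (.sigma A B) (TType (max (max j k) 0))
  | lam   : TypingM (A :: Γ) M B → TypingM Γ (.lam A M) (.pi A B)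
  | app'  : TypingM Γ M (.pi A B) → TypingM Γ N A' → Cum A' A →
            TypingM Γ (.app M N) (subst0 B N)
  | pair' : TypingM Γ M A → TypingM Γ N C → TypingM (A' :: Γ) B' (.type j) →
            Cum A A' → Cum C (subst0 B' M) →
            TypingM Γ (.pair M N (.sigma A' B')) (.sigma A' B')
  | proj1 : TypingM Γ M (.sigma A B) → TypingM Γ (.proj1 M) A
  | proj2 : TypingM Γ M (.sigma A B) → TypingM Γ (.proj2 M) (subst0 B (.proj1 M))
  | conv  : TypingM Γ M A → Conv A A' → Typing Γ A' (.type j) → TypingM Γ M A'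

end ECC

namespace ECC

open Term

theorem lift_lift_comm (d e : ℕ) (M : Term) : ∀ k k', k ≤ k' →
    lift d k (lift e k' M) = lift e (k' + d) (lift d k M) := by
  induction M with
  | var n =>
      intro k k' h
      simp only [lift]; split_ifs <;> simp only [lift] <;> split_ifs <;>
        simp only [Term.var.injEq] <;> omega
  | prop => intros; rfl
  | type j => intros; rfl
  | pi A B ihA ihB => intro k k' h
                      simp only [lift, ihA k k' h, ihB (k+1) (k'+1) (by omega), Nat.add_right_comm]
  | sigma A B ihA ihB => intro k k' h
                         simp only [lift, ihA k k' h, ihB (k+1) (k'+1) (by omega), Nat.add_right_comm]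
  | lam A B ihA ihB => intro k k' h
                       simp only [lift, ihA k k' h, ihB (k+1) (k'+1) (by omega), Nat.add_right_comm]
  | app A B ihA ihB => intro k k' h; simp only [lift, ihA k k' h, ihB k k' h]
  | pair A B C ihA ihB ihC => intro k k' h; simp only [lift, ihA k k' h, ihB k k' h, ihC k k' h]
  | proj1 A ihA => intro k k' h; simp only [lift, ihA k k' h]
  | proj2 A ihA => intro k k' h; simp only [lift, ihA k k' h]

theorem lift_lift_merge (d d' : ℕ) (M : Term) : ∀ k k', k ≤ k' → k' ≤ k + d →
    lift d' k' (lift d k M) = lift (d + d') k M := by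
  induction M with
  | var n =>
      intro k k' h h'
      simp only [lift]; split_ifs <;> simp only [lift] <;> split_ifs <;>
        simp only [Term.var.injEq] <;> omega
  | prop => intros; rfl
  | type j => intros; rfl
  | pi A B ihA ihB => intro k k' h h'
                      simp only [lift, ihA k k' h h', ihB (k+1) (k'+1) (by omega) (by omega)]
  | sigma A B ihA ihB => intro k k' h h'
                         simp only [lift, ihA k k' h h', ihB (k+1) (k'+1) (by omega) (by omega)]
  | lam A B ihA ihB => intro k k' h h'
                       simp only [lift, ihA k k' h h', ihB (k+1) (k'+1) (by omega) (by omega)]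
  | app A B ihA ihB => intro k k' h h'; simp only [lift, ihA k k' h h', ihB k k' h h']
  | pair A B C ihA ihB ihC => intro k k' h h'
                              simp only [lift, ihA k k' h h', ihB k k' h h', ihC k k' h h']
  | proj1 A ihA => intro k k' h h'; simp only [lift, ihA k k' h h']
  | proj2 A ihA => intro k k' h h'; simp only [lift, ihA k k' h h']

end ECC
namespace ECC
open Term

theorem lift_subst (d m : ℕ) (N M : Term) : ∀ j,
    lift d (j+m) (subst N j M) = subst (lift d m N) j (lift d (j+m+1) M) := by
  induction M with
  | var n =>
      intro j
      rcases Nat.lt_trichotomy n j with h | h | h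
      · simp only [subst, lift, if_pos h, if_pos (show n < j+m by omega),
          if_pos (show n < j+m+1 by omega)]
      · subst h
        simp only [subst, lift, lt_irrefl, if_false, if_pos rfl,
          if_pos (show n < n+m+1 by omega), if_true]
        rw [lift_lift_comm n d N 0 m (by omega), Nat.add_comm m n]
      · simp only [subst, lift, if_neg (show ¬ n < j by omega),
          if_neg (show n ≠ j by omega), if_false]
        split_ifs <;> (try simp only [subst, lift]) <;> (try split_ifs) <;>
          first | rfl | omega | (simp only [Term.var.injEq]; omega)
  | prop => intros; rfl
  | type j => intros; rfl
  | pi A B ihA ihB => intro j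
                      have h2 := ihB (j+1)
                      rw [show j+1+m = j+m+1 by omega] at h2
                      simp only [subst, lift, ihA j, h2]
  | sigma A B ihA ihB => intro j
                         have h2 := ihB (j+1)
                         rw [show j+1+m = j+m+1 by omega] at h2
                         simp only [subst, lift, ihA j, h2]
  | lam A B ihA ihB => intro j
                       have h2 := ihB (j+1)
                       rw [show j+1+m = j+m+1 by omega] at h2
                       simp only [subst, lift, ihA j, h2]
  | app A B ihA ihB => intro j; simp only [subst, lift, ihA j, ihB j]
  | pair A B C ihA ihB ihC => intro j; simp only [subst, lift, ihA j, ihB j, ihC j]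
  | proj1 A ihA => intro j; simp only [subst, lift, ihA j]
  | proj2 A ihA => intro j; simp only [subst, lift, ihA j]

end ECC
namespace ECC
open Term

theorem subst_lift_cancel (d : ℕ) (N M : Term) : ∀ k j, k ≤ j → j ≤ k + d →
    subst N j (lift (d+1) k M) = lift d k M := by
  induction M with
  | var n =>
      intro k j h h'
      simp only [lift, subst]; split_ifs <;> (try simp only [lift, subst]) <;>
        (try split_ifs) <;> first | rfl | omega | (simp only [Term.var.injEq]; omega)
  | prop => intros; rfl
  | type j => intros; rfl
  | pi A B ihA ihB => intro k j h h'
                      simp only [lift, subst, ihA k j h h', ihB (k+1) (j+1) (by omega) (by omega)]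
  | sigma A B ihA ihB => intro k j h h'
                         simp only [lift, subst, ihA k j h h', ihB (k+1) (j+1) (by omega) (by omega)]
  | lam A B ihA ihB => intro k j h h'
                       simp only [lift, subst, ihA k j h h', ihB (k+1) (j+1) (by omega) (by omega)]
  | app A B ihA ihB => intro k j h h'; simp only [lift, subst, ihA k j h h', ihB k j h h']
  | pair A B C ihA ihB ihC => intro k j h h'
                              simp only [lift, subst, ihA k j h h', ihB k j h h', ihC k j h h']
  | proj1 A ihA => intro k j h h'; simp only [lift, subst, ihA k j h h']
  | proj2 A ihA => intro k j h h'; simp only [lift, subst, ihA k j h h']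

theorem subst_lift (d m : ℕ) (N P : Term) : ∀ c,
    subst N (c+d+m) (lift d c P) = lift d c (subst N (c+m) P) := by
  induction P with
  | var n =>
      intro c
      rcases Nat.lt_trichotomy n (c+m) with h | h | h
      · simp only [lift, subst]; split_ifs <;> (try simp only [lift, subst]) <;>
          (try split_ifs) <;> first | rfl | omega | (simp only [Term.var.injEq]; omega)
      · subst h
        have hm := lift_lift_merge (c+m) d N 0 c (by omega) (by omega)
        simp [lift, subst, hm, show ¬ c+m < c by omega, show c+m+d = c+d+m by omega]
      · simp only [lift, subst]; split_ifs <;> (try simp only [lift, subst]) <;>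
          (try split_ifs) <;> first | rfl | omega | (simp only [Term.var.injEq]; omega)
  | prop => intros; rfl
  | type j => intros; rfl
  | pi A B ihA ihB => intro c
                      have h2 := ihB (c+1)
                      rw [show c+1+d+m = c+d+m+1 by omega, show c+1+m = c+m+1 by omega] at h2
                      simp only [lift, subst, ihA c, h2]
  | sigma A B ihA ihB => intro c
                         have h2 := ihB (c+1)
                         rw [show c+1+d+m = c+d+m+1 by omega, show c+1+m = c+m+1 by omega] at h2
                         simp only [lift, subst, ihA c, h2]
  | lam A B ihA ihB => intro c
                       have h2 := ihB (c+1)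
                       rw [show c+1+d+m = c+d+m+1 by omega, show c+1+m = c+m+1 by omega] at h2
                       simp only [lift, subst, ihA c, h2]
  | app A B ihA ihB => intro c; simp only [lift, subst, ihA c, ihB c]
  | pair A B C ihA ihB ihC => intro c; simp only [lift, subst, ihA c, ihB c, ihC c]
  | proj1 A ihA => intro c; simp only [lift, subst, ihA c]
  | proj2 A ihA => intro c; simp only [lift, subst, ihA c]

theorem subst_subst (m : ℕ) (N P M : Term) : ∀ i,
    subst N (i+m) (subst P i M) = subst (subst N m P) i (subst N (i+m+1) M) := by
  induction M with
  | var n =>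
      intro i
      by_cases h1 : n < i
      · simp only [subst] <;> split_ifs <;> (try simp only [subst]) <;> (try split_ifs) <;>
          first | rfl | omega | (simp only [Term.var.injEq]; omega) | (exfalso; omega)
      by_cases h2 : n = i
      · subst h2
        have hs := subst_lift n m N P 0
        simp only [Nat.zero_add] at hs
        simp [subst, hs, show n < n+m+1 by omega]
      by_cases h4 : n = i+m+1
      · subst h4
        have hc := subst_lift_cancel (i+m) (subst N m P) N 0 i (by omega) (by omega)
        simp [subst, hc, show ¬ i+m+1 < i by omega, show ¬ i+m+1 = i by omega,
          show ¬ i+m < i by omega]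
      · simp only [subst] <;> split_ifs <;> (try simp only [subst]) <;> (try split_ifs) <;>
          first | rfl | omega | (simp only [Term.var.injEq]; omega) | (exfalso; omega)
  | prop => intros; rfl
  | type j => intros; rfl
  | pi A B ihA ihB => intro i
                      have h2 := ihB (i+1)
                      rw [show i+1+m = i+m+1 by omega] at h2
                      simp only [subst, ihA i, h2]
  | sigma A B ihA ihB => intro i
                         have h2 := ihB (i+1)
                         rw [show i+1+m = i+m+1 by omega] at h2
                         simp only [subst, ihA i, h2]
  | lam A B ihA ihB => intro i
                       have h2 := ihB (i+1)
                       rw [show i+1+m = i+m+1 by omega] at h2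
                       simp only [subst, ihA i, h2]
  | app A B ihA ihB => intro i; simp only [subst, ihA i, ihB i]
  | pair A B C ihA ihB ihC => intro i; simp only [subst, ihA i, ihB i, ihC i]
  | proj1 A ihA => intro i; simp only [subst, ihA i]
  | proj2 A ihA => intro i; simp only [subst, ihA i]

end ECC
namespace ECC
open Term

/-- Parallel reduction. -/
inductive Par : Term → Term → Prop
  | var   : Par (.var n) (.var n)
  | prop  : Par .prop .prop
  | type  : Par (.type j) (.type j)
  | pi    : Par A A' → Par B B' → Par (.pi A B) (.pi A' B')
  | sigma : Par A A' → Par B B' → Par (.sigma A B) (.sigma A' B')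
  | lam   : Par A A' → Par M M' → Par (.lam A M) (.lam A' M')
  | app   : Par M M' → Par N N' → Par (.app M N) (.app M' N')
  | pair  : Par M M' → Par N N' → Par B B' → Par (.pair M N B) (.pair M' N' B')
  | proj1 : Par M M' → Par (.proj1 M) (.proj1 M')
  | proj2 : Par M M' → Par (.proj2 M) (.proj2 M')
  | beta  : Par M M' → Par N N' → Par (.app (.lam A M) N) (subst0 M' N')
  | pr1   : Par M M' → Par (.proj1 (.pair M N B)) M'
  | pr2   : Par N N' → Par (.proj2 (.pair M N B)) N'

theorem par_refl (M : Term) : Par M M := by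
  induction M with
  | var n => exact Par.var
  | prop => exact Par.prop
  | type j => exact Par.type
  | pi A B ihA ihB => exact Par.pi ihA ihB
  | sigma A B ihA ihB => exact Par.sigma ihA ihB
  | lam A B ihA ihB => exact Par.lam ihA ihB
  | app A B ihA ihB => exact Par.app ihA ihB
  | pair A B C ihA ihB ihC => exact Par.pair ihA ihB ihC
  | proj1 A ihA => exact Par.proj1 ihA
  | proj2 A ihA => exact Par.proj2 ihA

theorem red_par (h : Red M N) : Par M N := by
  induction h with
  | beta => exact Par.beta (par_refl _) (par_refl _)
  | pr1 => exact Par.pr1 (par_refl _)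
  | pr2 => exact Par.pr2 (par_refl _)
  | piL _ ih => exact Par.pi ih (par_refl _)
  | piR _ ih => exact Par.pi (par_refl _) ih
  | sigmaL _ ih => exact Par.sigma ih (par_refl _)
  | sigmaR _ ih => exact Par.sigma (par_refl _) ih
  | lamL _ ih => exact Par.lam ih (par_refl _)
  | lamR _ ih => exact Par.lam (par_refl _) ih
  | appL _ ih => exact Par.app ih (par_refl _)
  | appR _ ih => exact Par.app (par_refl _) ih
  | pairL _ ih => exact Par.pair ih (par_refl _) (par_refl _)
  | pairR _ ih => exact Par.pair (par_refl _) ih (par_refl _)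
  | pairB _ ih => exact Par.pair (par_refl _) (par_refl _) ih
  | proj1C _ ih => exact Par.proj1 ih
  | proj2C _ ih => exact Par.proj2 ih

theorem par_lift (d : ℕ) (h : Par M M') : ∀ k, Par (lift d k M) (lift d k M') := by
  induction h with
  | var => intro k; simp only [lift]; split_ifs <;> exact Par.var
  | prop => intro k; exact Par.prop
  | type => intro k; exact Par.type
  | pi _ _ ihA ihB => intro k; exact Par.pi (ihA k) (ihB (k+1))
  | sigma _ _ ihA ihB => intro k; exact Par.sigma (ihA k) (ihB (k+1))
  | lam _ _ ihA ihB => intro k; exact Par.lam (ihA k) (ihB (k+1))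
  | app _ _ ihA ihB => intro k; exact Par.app (ihA k) (ihB k)
  | pair _ _ _ ihA ihB ihC => intro k; exact Par.pair (ihA k) (ihB k) (ihC k)
  | proj1 _ ih => intro k; exact Par.proj1 (ih k)
  | proj2 _ ih => intro k; exact Par.proj2 (ih k)
  | @beta M M' N N' A hM hN ihM ihN =>
      intro k
      have e := lift_subst d k N' M' 0
      simp only [Nat.zero_add] at e
      simp only [lift, subst0, e]
      exact Par.beta (ihM (k+1)) (ihN k)
  | pr1 _ ih => intro k; exact Par.pr1 (ih k)
  | pr2 _ ih => intro k; exact Par.pr2 (ih k)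

theorem par_subst (hP : Par P P') (h : Par M M') :
    ∀ k, Par (subst P k M) (subst P' k M') := by
  induction h with
  | @var n => intro k
              simp only [subst]; split_ifs
              · exact Par.var
              · exact par_lift k hP 0
              · exact Par.var
  | prop => intro k; exact Par.prop
  | type => intro k; exact Par.type
  | pi _ _ ihA ihB => intro k; exact Par.pi (ihA k) (ihB (k+1))
  | sigma _ _ ihA ihB => intro k; exact Par.sigma (ihA k) (ihB (k+1))
  | lam _ _ ihA ihB => intro k; exact Par.lam (ihA k) (ihB (k+1))
  | app _ _ ihA ihB => intro k; exact Par.app (ihA k) (ihB k)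
  | pair _ _ _ ihA ihB ihC => intro k; exact Par.pair (ihA k) (ihB k) (ihC k)
  | proj1 _ ih => intro k; exact Par.proj1 (ih k)
  | proj2 _ ih => intro k; exact Par.proj2 (ih k)
  | @beta M M' N N' A hM hN ihM ihN =>
      intro k
      have e := subst_subst k P' N' M' 0
      simp only [Nat.zero_add] at e
      simp only [subst, subst0, e]
      exact Par.beta (ihM (k+1)) (ihN k)
  | pr1 _ ih => intro k; exact Par.pr1 (ih k)
  | pr2 _ ih => intro k; exact Par.pr2 (ih k)

/-- Complete development. -/
def cd : Term → Term
  | .var n => .var n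
  | .prop => .prop
  | .type j => .type j
  | .pi A B => .pi (cd A) (cd B)
  | .sigma A B => .sigma (cd A) (cd B)
  | .lam A M => .lam (cd A) (cd M)
  | .app (.lam _ M) N => subst0 (cd M) (cd N)
  | .app (.var n) N => .app (cd (.var n)) (cd N)
  | .app .prop N => .app (cd .prop) (cd N)
  | .app (.type j) N => .app (cd (.type j)) (cd N)
  | .app (.pi A B) N => .app (cd (.pi A B)) (cd N)
  | .app (.sigma A B) N => .app (cd (.sigma A B)) (cd N)
  | .app (.app M M') N => .app (cd (.app M M')) (cd N)
  | .app (.pair M M' B) N => .app (cd (.pair M M' B)) (cd N)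
  | .app (.proj1 M) N => .app (cd (.proj1 M)) (cd N)
  | .app (.proj2 M) N => .app (cd (.proj2 M)) (cd N)
  | .pair M N B => .pair (cd M) (cd N) (cd B)
  | .proj1 (.pair M _ _) => cd M
  | .proj1 (.var n) => .proj1 (cd (.var n))
  | .proj1 .prop => .proj1 (cd .prop)
  | .proj1 (.type j) => .proj1 (cd (.type j))
  | .proj1 (.pi A B) => .proj1 (cd (.pi A B))
  | .proj1 (.sigma A B) => .proj1 (cd (.sigma A B))
  | .proj1 (.lam A M) => .proj1 (cd (.lam A M))
  | .proj1 (.app M N) => .proj1 (cd (.app M N))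
  | .proj1 (.proj1 M) => .proj1 (cd (.proj1 M))
  | .proj1 (.proj2 M) => .proj1 (cd (.proj2 M))
  | .proj2 (.pair _ N _) => cd N
  | .proj2 (.var n) => .proj2 (cd (.var n))
  | .proj2 .prop => .proj2 (cd .prop)
  | .proj2 (.type j) => .proj2 (cd (.type j))
  | .proj2 (.pi A B) => .proj2 (cd (.pi A B))
  | .proj2 (.sigma A B) => .proj2 (cd (.sigma A B))
  | .proj2 (.lam A M) => .proj2 (cd (.lam A M))
  | .proj2 (.app M N) => .proj2 (cd (.app M N))
  | .proj2 (.proj1 M) => .proj2 (cd (.proj1 M))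
  | .proj2 (.proj2 M) => .proj2 (cd (.proj2 M))

theorem par_lam_inv (h : Par (.lam A M) X) :
    ∃ A' M', X = .lam A' M' ∧ Par A A' ∧ Par M M' := by
  cases h with
  | lam hA hM => exact ⟨_, _, rfl, hA, hM⟩

theorem par_pair_inv (h : Par (.pair M N B) X) :
    ∃ M' N' B', X = .pair M' N' B' ∧ Par M M' ∧ Par N N' ∧ Par B B' := by
  cases h with
  | pair hM hN hB => exact ⟨_, _, _, rfl, hM, hN, hB⟩

theorem par_cd (h : Par M N) : Par N (cd M) := by
  induction h with
  | var => exact Par.var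
  | prop => exact Par.prop
  | type => exact Par.type
  | pi _ _ ihA ihB => exact Par.pi ihA ihB
  | sigma _ _ ihA ihB => exact Par.sigma ihA ihB
  | lam _ _ ihA ihB => exact Par.lam ihA ihB
  | @app M M' N N' hM hN ihM ihN =>
      cases M with
      | lam A P =>
          obtain ⟨A'', P'', rfl, hA2, hP2⟩ := par_lam_inv hM
          obtain ⟨A3, P3, hEq, hA3, hP3⟩ := par_lam_inv ihM
          simp only [cd] at hEq ⊢
          cases hEq
          exact Par.beta hP3 ihN
      | var n => exact Par.app ihM ihN
      | prop => exact Par.app ihM ihN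
      | type j => exact Par.app ihM ihN
      | pi A B => exact Par.app ihM ihN
      | sigma A B => exact Par.app ihM ihN
      | app P Q => exact Par.app ihM ihN
      | pair P Q B => exact Par.app ihM ihN
      | proj1 P => exact Par.app ihM ihN
      | proj2 P => exact Par.app ihM ihN
  | pair _ _ _ ihM ihN ihB => exact Par.pair ihM ihN ihB
  | @proj1 M M' hM ihM =>
      cases M with
      | pair P Q B =>
          obtain ⟨P'', Q'', B'', rfl, hP2, hQ2, hB2⟩ := par_pair_inv hM
          obtain ⟨P3, Q3, B3, hEq, hP3, hQ3, hB3⟩ := par_pair_inv ihM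
          simp only [cd] at hEq ⊢
          cases hEq
          exact Par.pr1 hP3
      | var n => exact Par.proj1 ihM
      | prop => exact Par.proj1 ihM
      | type j => exact Par.proj1 ihM
      | pi A B => exact Par.proj1 ihM
      | sigma A B => exact Par.proj1 ihM
      | lam A P => exact Par.proj1 ihM
      | app P Q => exact Par.proj1 ihM
      | proj1 P => exact Par.proj1 ihM
      | proj2 P => exact Par.proj1 ihM
  | @proj2 M M' hM ihM =>
      cases M with
      | pair P Q B =>
          obtain ⟨P'', Q'', B'', rfl, hP2, hQ2, hB2⟩ := par_pair_inv hM
          obtain ⟨P3, Q3, B3, hEq, hP3, hQ3, hB3⟩ := par_pair_inv ihM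
          simp only [cd] at hEq ⊢
          cases hEq
          exact Par.pr2 hQ3
      | var n => exact Par.proj2 ihM
      | prop => exact Par.proj2 ihM
      | type j => exact Par.proj2 ihM
      | pi A B => exact Par.proj2 ihM
      | sigma A B => exact Par.proj2 ihM
      | lam A P => exact Par.proj2 ihM
      | app P Q => exact Par.proj2 ihM
      | proj1 P => exact Par.proj2 ihM
      | proj2 P => exact Par.proj2 ihM
  | @beta M M' N N' A hM hN ihM ihN =>
      simp only [cd]
      exact par_subst ihN ihM 0
  | @pr1 M M' N B hM ihM =>
      simp only [cd]
      exact ihM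
  | @pr2 N N' M B hN ihN =>
      simp only [cd]
      exact ihN

theorem par_diamond (h1 : Par M N1) (h2 : Par M N2) : ∃ X, Par N1 X ∧ Par N2 X :=
  ⟨cd M, par_cd h1, par_cd h2⟩

end ECC
namespace ECC
open Term Relation

/-- Joinability by parallel reduction. -/
def J (M N : Term) : Prop := Relation.Join (Relation.ReflTransGen Par) M N

theorem equivJ : Equivalence J := by
  apply Relation.equivalence_join_reflTransGen
  intro a b c hab hac
  obtain ⟨d, hbd, hcd⟩ := par_diamond hab hac
  exact ⟨d, ReflGen.single hbd, ReflTransGen.single hcd⟩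

theorem rtg_J (h : ReflTransGen Par M N) : J M N := ⟨N, h, ReflTransGen.refl⟩

theorem conv_J (h : Conv M N) : J M N := by
  induction h with
  | rel a b hab => exact ⟨b, ReflTransGen.single (red_par hab), ReflTransGen.refl⟩
  | refl a => exact equivJ.refl a
  | symm a b _ ih => exact equivJ.symm ih
  | trans a b c _ _ ih1 ih2 => exact equivJ.trans ih1 ih2

/-- Ground terms: built only from `prop`, `type`, `sigma`. -/
inductive Grd : Term → Prop
  | prop : Grd .prop
  | type : Grd (.type j)
  | sigma : Grd A → Grd B → Grd (.sigma A B)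

theorem par_grd (hg : Grd M) : ∀ X, Par M X → X = M := by
  induction hg with
  | prop => intro X h; cases h; rfl
  | type => intro X h; cases h; rfl
  | sigma hA hB ihA ihB =>
      intro X h
      cases h with
      | sigma h1 h2 => rw [ihA _ h1, ihB _ h2]

theorem rtg_grd (hg : Grd M) (h : ReflTransGen Par M X) : X = M := by
  induction h with
  | refl => rfl
  | tail h1 h2 ih => subst ih; exact par_grd hg _ h2

theorem grd_conv_eq (hM : Grd M) (hN : Grd N) (h : Conv M N) : M = N := by
  obtain ⟨X, h1, h2⟩ := conv_J h
  rw [← rtg_grd hM h1, ← rtg_grd hN h2]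

theorem rtg_pi_headed (h : ReflTransGen Par (.pi A B) X) :
    ∃ A' B', X = .pi A' B' := by
  induction h with
  | refl => exact ⟨A, B, rfl⟩
  | tail h1 h2 ih =>
      obtain ⟨A', B', rfl⟩ := ih
      cases h2 with
      | pi hA hB => exact ⟨_, _, rfl⟩

theorem rtg_sigma_inv (h : ReflTransGen Par (.sigma A B) X) :
    ∃ A' B', X = .sigma A' B' ∧ ReflTransGen Par A A' ∧ ReflTransGen Par B B' := by
  induction h with
  | refl => exact ⟨A, B, rfl, ReflTransGen.refl, ReflTransGen.refl⟩
  | tail h1 h2 ih =>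
      obtain ⟨A', B', rfl, hA, hB⟩ := ih
      cases h2 with
      | sigma h3 h4 => exact ⟨_, _, rfl, hA.tail h3, hB.tail h4⟩

theorem grd_not_conv_pi (hg : Grd M) (h : Conv M (.pi A B)) : False := by
  obtain ⟨X, h1, h2⟩ := conv_J h
  obtain ⟨A', B', rfl⟩ := rtg_pi_headed h2
  have := rtg_grd hg h1
  subst this
  cases hg

/-- If a ground `sigma S T` is convertible to `sigma A B`, then `A` reduces to `S`
and `B` reduces to `T`. -/
theorem conv_sigma_grd (hg : Grd (.sigma S T)) (h : Conv (.sigma S T) (.sigma A B)) :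
    ReflTransGen Par A S ∧ ReflTransGen Par B T := by
  obtain ⟨X, h1, h2⟩ := conv_J h
  have hX := rtg_grd hg h1
  subst hX
  obtain ⟨A', B', hEq, hA, hB⟩ := rtg_sigma_inv h2
  cases hEq
  exact ⟨hA, hB⟩

theorem conv_refl (M : Term) : Conv M M := Relation.EqvGen.refl M

end ECC
namespace ECC
open Term

theorem main_claim :
    Cum (.sigma (.sigma .prop .prop) .prop) (.sigma (.sigma .prop (.type 0)) .prop) ∧
    SCumL 1 (.sigma (.sigma .prop (.type 0)) .prop) (.sigma (.sigma .prop (.type 0)) (.type 0)) ∧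
    ¬ CumL 1 (.sigma (.sigma .prop .prop) .prop) (.sigma (.sigma .prop (.type 0)) .prop) := by
  have gC : Grd (Term.sigma (.sigma .prop .prop) .prop) :=
    Grd.sigma (Grd.sigma Grd.prop Grd.prop) Grd.prop
  have gA : Grd (Term.sigma (.sigma .prop (.type 0)) .prop) :=
    Grd.sigma (Grd.sigma Grd.prop Grd.type) Grd.prop
  have gB : Grd (Term.sigma (.sigma .prop (.type 0)) (.type 0)) :=
    Grd.sigma (Grd.sigma Grd.prop Grd.type) Grd.type
  refine ⟨?_, ⟨?_, ?_⟩, ?_⟩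
  · exact Cum.sigma (Cum.sigma (Cum.conv (conv_refl _)) Cum.propType) (Cum.conv (conv_refl _))
  · exact CumL.sigma (conv_refl _) (conv_refl _) (CumL.conv (conv_refl _)) CumL.propType
  · intro h
    exact absurd (grd_conv_eq gA gB h) (by decide)
  · intro h
    cases h with
    | conv hc => exact absurd (grd_conv_eq gC gA hc) (by decide)
    | succ h0 =>
        cases h0 with
        | conv hc => exact absurd (grd_conv_eq gC gA hc) (by decide)
    | pi hM hN hAA hBB => exact grd_not_conv_pi gC hM
    | sigma hM hN hA0 hB0 =>
        obtain ⟨hL, _⟩ := conv_sigma_grd gC hM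
        obtain ⟨hL', _⟩ := conv_sigma_grd gA hN
        cases hA0 with
        | conv hc =>
            have j1 : J (.sigma .prop .prop) _ := equivJ.symm (rtg_J hL)
            have j2 := conv_J hc
            have j3 := rtg_J hL'
            obtain ⟨X, hx1, hx2⟩ := equivJ.trans (equivJ.trans j1 j2) j3
            have e1 := rtg_grd (Grd.sigma Grd.prop Grd.prop) hx1
            have e2 := rtg_grd (Grd.sigma Grd.prop Grd.type) hx2
            rw [e1] at e2
            simp at e2
        | propType => exact absurd (rtg_grd Grd.prop hL) (by decide)
        | typeType hjk => exact Term.noConfusion (rtg_grd Grd.type hL)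

end ECC

/-- the stratification claim fails in ECC.  With
`C := (Prop × Prop) × Prop`, `A := (Prop × Type₀) × Prop`, `B := (Prop × Type₀) × Type₀`
(written as nested Σ-types), one has `C ⪯ A ≺₁ B` but not `C ⪯₁ A`. -/
theorem stratification_claim_fails :
    let C : ECC.Term := .sigma (.sigma .prop .prop) .prop
    let A : ECC.Term := .sigma (.sigma .prop (.type 0)) .prop
    let B : ECC.Term := .sigma (.sigma .prop (.type 0)) (.type 0)
    ECC.Cum C A ∧ ECC.SCumL 1 A B ∧ ¬ ECC.CumL 1 C A := by
  intro C A B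
  exact ECC.main_claim
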